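/- For b ≥ 0, real λ with 0 < λ ≤ ε < 1 and x, t ≥ 1, using the small-argument asymptotics J_b(λ) ~ (λ/2)^b/Γ(b+1) and Y_b(λ) ~ −(Γ(b)/2)(2/λ)^b (b>0), one has the pointwise bound |G_b(λ,x)G_b(λ,t)·λ/(J_b(λ)² + Y_b(λ)²)| ≤ c_b·((xt)^b + (x/t)^b + (t/x)^b + (xt)^{−b}) for some constant c_b > 0 depending only on b and ε. -/

import Mathlib

/-- small-λ bound for the spectral-measure kernel: given the standard
small- and large-argument bounds for J_b, Y_b and the lower bound on J_b² + Y_b²,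
|G_b(λ,x)G_b(λ,t)·λ/(J_b(λ)²+Y_b(λ)²)| ≤ c_b((xt)^b + (x/t)^b + (t/x)^b + (xt)^{−b})
for 0 < λ ≤ ε and x, t ≥ 1. -/
theorem stmt10 (b : ℝ) (hb : 0 < b) (ε : ℝ) (hε : 0 < ε) (hε1 : ε < 1)
    (J Y : ℝ → ℝ) (Cb cb : ℝ) (hCb : 0 < Cb) (hcb : 0 < cb)
    (hJsmall : ∀ w : ℝ, 0 < w → w ≤ 1 → |J w| ≤ Cb * w ^ b)
    (hYsmall : ∀ w : ℝ, 0 < w → w ≤ 1 → |Y w| ≤ Cb * w ^ (-b))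
    (hJlarge : ∀ w : ℝ, 1 ≤ w → |J w| ≤ Cb)
    (hYlarge : ∀ w : ℝ, 1 ≤ w → |Y w| ≤ Cb)
    (hlower : ∀ lam : ℝ, 0 < lam → lam ≤ ε → cb * lam ^ (-(2 * b)) ≤ J lam ^ 2 + Y lam ^ 2)
    (G : ℝ → ℝ → ℝ) (hG : G = fun lam x => Y lam * J (lam * x) - J lam * Y (lam * x)) :
    ∃ c > (0:ℝ), ∀ lam : ℝ, 0 < lam → lam ≤ ε → ∀ x t : ℝ, 1 ≤ x → 1 ≤ t →
      |G lam x * G lam t * lam / (J lam ^ 2 + Y lam ^ 2)| ≤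
        c * ((x * t) ^ b + (x / t) ^ b + (t / x) ^ b + (x * t) ^ (-b)) := by
  subst hG
  refine ⟨4 * Cb ^ 2 * Cb ^ 2 / cb, by positivity, ?_⟩
  intro lam hlam hlamε x t hx ht
  have hx0 : (0:ℝ) < x := one_pos.trans_le hx
  have ht0 : (0:ℝ) < t := one_pos.trans_le ht
  have hlam1 : lam ≤ 1 := hlamε.trans hε1.le
  -- uniform bound on J
  have hJ : ∀ w : ℝ, 0 < w → |J w| ≤ Cb * w ^ b := by
    intro w hw
    rcases le_or_gt w 1 with h | h
    · exact hJsmall w hw h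
    · have h1 : (1:ℝ) ≤ w ^ b := Real.one_le_rpow h.le hb.le
      calc |J w| ≤ Cb := hJlarge w h.le
        _ = Cb * 1 := (mul_one Cb).symm
        _ ≤ Cb * w ^ b := by gcongr
  -- uniform bound on Y
  have hY : ∀ w : ℝ, 0 < w → |Y w| ≤ Cb * (w ^ (-b) + w ^ b) := by
    intro w hw
    have hp1 : 0 < w ^ b := Real.rpow_pos_of_pos hw b
    have hp2 : 0 < w ^ (-b) := Real.rpow_pos_of_pos hw (-b)
    rcases le_or_gt w 1 with h | h
    · have := hYsmall w hw h
      nlinarith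
    · have h1 : (1:ℝ) ≤ w ^ b := Real.one_le_rpow h.le hb.le
      have := hYlarge w h.le
      nlinarith
  set A := lam ^ b with hA
  have hA0 : 0 < A := Real.rpow_pos_of_pos hlam b
  have hA1 : A ≤ 1 := Real.rpow_le_one hlam.le hlam1 hb.le
  have hAinv : lam ^ (-b) = A⁻¹ := Real.rpow_neg hlam.le b
  -- bound on G
  have hGb : ∀ z : ℝ, 1 ≤ z →
      |Y lam * J (lam * z) - J lam * Y (lam * z)| ≤ 2 * Cb ^ 2 * (z ^ b + z ^ (-b)) := by
    intro z hz
    have hz0 : (0:ℝ) < z := one_pos.trans_le hz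
    have hzb : 0 < z ^ b := Real.rpow_pos_of_pos hz0 b
    have hzb' : 0 < z ^ (-b) := Real.rpow_pos_of_pos hz0 (-b)
    have e1 : (lam * z) ^ b = A * z ^ b := Real.mul_rpow hlam.le hz0.le
    have e2 : (lam * z) ^ (-b) = A⁻¹ * z ^ (-b) := by
      rw [Real.mul_rpow hlam.le hz0.le, hAinv]
    have h1 : |Y lam| ≤ Cb * A⁻¹ := by
      have := hYsmall lam hlam hlam1; rwa [hAinv] at this
    have h2 : |J (lam * z)| ≤ Cb * (A * z ^ b) := by
      have := hJ (lam * z) (mul_pos hlam hz0); rwa [e1] at this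
    have h3 : |J lam| ≤ Cb * A := hJsmall lam hlam hlam1
    have h4 : |Y (lam * z)| ≤ Cb * (A⁻¹ * z ^ (-b) + A * z ^ b) := by
      have := hY (lam * z) (mul_pos hlam hz0); rwa [e1, e2] at this
    have m1 : |Y lam| * |J (lam * z)| ≤ (Cb * A⁻¹) * (Cb * (A * z ^ b)) :=
      mul_le_mul h1 h2 (abs_nonneg _) (by positivity)
    have m2 : |J lam| * |Y (lam * z)| ≤ (Cb * A) * (Cb * (A⁻¹ * z ^ (-b) + A * z ^ b)) :=
      mul_le_mul h3 h4 (abs_nonneg _) (by positivity)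
    have r1 : (Cb * A⁻¹) * (Cb * (A * z ^ b)) = Cb ^ 2 * z ^ b := by
      field_simp
    have r2 : (Cb * A) * (Cb * (A⁻¹ * z ^ (-b) + A * z ^ b))
        = Cb ^ 2 * (z ^ (-b) + A ^ 2 * z ^ b) := by
      field_simp
    have hA2le : A ^ 2 ≤ 1 := pow_le_one₀ hA0.le hA1
    have hAz : A ^ 2 * z ^ b ≤ z ^ b := mul_le_of_le_one_left hzb.le hA2le
    calc |Y lam * J (lam * z) - J lam * Y (lam * z)|
        ≤ |Y lam * J (lam * z)| + |J lam * Y (lam * z)| := abs_sub _ _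
      _ = |Y lam| * |J (lam * z)| + |J lam| * |Y (lam * z)| := by rw [abs_mul, abs_mul]
      _ ≤ Cb ^ 2 * z ^ b + Cb ^ 2 * (z ^ (-b) + A ^ 2 * z ^ b) := by
          rw [← r1, ← r2]; exact add_le_add m1 m2
      _ ≤ 2 * Cb ^ 2 * (z ^ b + z ^ (-b)) := by nlinarith
  -- denominator
  have hA2 : lam ^ (-(2 * b)) = (A ^ 2)⁻¹ := by
    rw [show -(2 * b) = -b + -b by ring, Real.rpow_add hlam, hAinv, sq, mul_inv]
  have hden : cb * (A ^ 2)⁻¹ ≤ J lam ^ 2 + Y lam ^ 2 := by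
    have := hlower lam hlam hlamε; rwa [hA2] at this
  have hdpos : (0:ℝ) < J lam ^ 2 + Y lam ^ 2 := lt_of_lt_of_le (by positivity) hden
  set Sx := x ^ b + x ^ (-b) with hSx
  set St := t ^ b + t ^ (-b) with hSt
  have hSx0 : 0 < Sx := by positivity
  have hSt0 : 0 < St := by positivity
  have hnum : |((fun lam x => Y lam * J (lam * x) - J lam * Y (lam * x)) lam x *
      (fun lam x => Y lam * J (lam * x) - J lam * Y (lam * x)) lam t * lam)| ≤
      (2 * Cb ^ 2 * Sx) * (2 * Cb ^ 2 * St) * lam := by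
    simp only
    rw [abs_mul, abs_mul, abs_of_pos hlam]
    have g1 := hGb x hx
    have g2 := hGb t ht
    have := mul_le_mul g1 g2 (abs_nonneg _) (by positivity)
    exact mul_le_mul_of_nonneg_right this hlam.le
  have key : |((fun lam x => Y lam * J (lam * x) - J lam * Y (lam * x)) lam x *
      (fun lam x => Y lam * J (lam * x) - J lam * Y (lam * x)) lam t * lam) /
      (J lam ^ 2 + Y lam ^ 2)| ≤
      (2 * Cb ^ 2 * Sx) * (2 * Cb ^ 2 * St) * lam / (cb * (A ^ 2)⁻¹) := by
    rw [abs_div, abs_of_pos hdpos]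
    exact div_le_div₀ (by positivity) hnum (by positivity) hden
  have simp1 : (2 * Cb ^ 2 * Sx) * (2 * Cb ^ 2 * St) * lam / (cb * (A ^ 2)⁻¹)
      = (4 * Cb ^ 2 * Cb ^ 2 / cb) * (Sx * St) * (lam * A ^ 2) := by
    rw [div_eq_mul_inv, div_eq_mul_inv, mul_inv, inv_inv]; ring
  have hlamA : lam * A ^ 2 ≤ 1 := by
    calc lam * A ^ 2 ≤ 1 * 1 :=
          mul_le_mul hlam1 (pow_le_one₀ hA0.le hA1) (by positivity) zero_le_one
      _ = 1 := one_mul 1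
  have hfin : (2 * Cb ^ 2 * Sx) * (2 * Cb ^ 2 * St) * lam / (cb * (A ^ 2)⁻¹)
      ≤ (4 * Cb ^ 2 * Cb ^ 2 / cb) * (Sx * St) := by
    rw [simp1]
    exact mul_le_of_le_one_right (by positivity) hlamA
  have hprod : Sx * St = (x * t) ^ b + (x / t) ^ b + (t / x) ^ b + (x * t) ^ (-b) := by
    rw [hSx, hSt, Real.mul_rpow hx0.le ht0.le, Real.mul_rpow hx0.le ht0.le,
      Real.div_rpow hx0.le ht0.le, Real.div_rpow ht0.le hx0.le,
      Real.rpow_neg hx0.le, Real.rpow_neg ht0.le, div_eq_mul_inv, div_eq_mul_inv]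
    ring
  calc _ ≤ (2 * Cb ^ 2 * Sx) * (2 * Cb ^ 2 * St) * lam / (cb * (A ^ 2)⁻¹) := key
    _ ≤ (4 * Cb ^ 2 * Cb ^ 2 / cb) * (Sx * St) := hfin
    _ = (4 * Cb ^ 2 * Cb ^ 2 / cb) *
        ((x * t) ^ b + (x / t) ^ b + (t / x) ^ b + (x * t) ^ (-b)) := by rw [hprod]
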